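/- Let 0 < λ* < 1 and let τ_F, τ_G, τ_{FG} be real numbers with τ_F ≠ τ_G satisfying (1−λ*)² / (2((1−λ*)² + λ*)) ≤ (τ_{FG} − τ_F)/(τ_G − τ_F) < 1. Define c : [0,1] → ℝ by c(λ) = [ (1−λ*²)τ_F − (1−λ*)²τ_G − 2λ*(1−λ*)τ_{FG} ] · λ for 0 ≤ λ < λ*, and c(λ) = 2λ*(τ_{FG} − τ_G)(1−λ) + λ*²(τ_F + τ_G − 2τ_{FG})(1/λ − λ) for λ* ≤ λ ≤ 1. Then the function λ ↦ |c(λ)| attains its maximum over [0,1] at λ = λ* and this maximizer is unique, i.e. |c(λ)| < |c(λ*)| for every λ ∈ [0,1] with λ ≠ λ*. -/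

import Mathlib

set_option maxHeartbeats 1000000


/-- Under a single change-point at relative position `λ* ∈ (0,1)` with
`τ_F ≠ τ_G` and `(1−λ*)²/(2((1−λ*)²+λ*)) ≤ (τ_FG − τ_F)/(τ_G − τ_F) < 1`, the limiting mean
function `c` of the weighted Kendall's-tau CUSUM process satisfies `|c(λ)| < |c(λ*)|` for
every `λ ∈ [0,1]` with `λ ≠ λ*`; i.e. `|c|` has its unique maximum at `λ*`. -/
theorem cusum_limit_unique_maximizer
    (lstar τF τG τFG : ℝ)
    (h0 : 0 < lstar) (h1 : lstar < 1) (hne : τF ≠ τG)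
    (hlow : (1 - lstar) ^ 2 / (2 * ((1 - lstar) ^ 2 + lstar)) ≤ (τFG - τF) / (τG - τF))
    (hhigh : (τFG - τF) / (τG - τF) < 1)
    (c : ℝ → ℝ)
    (hc₁ : ∀ l : ℝ, 0 ≤ l → l < lstar →
      c l = ((1 - lstar ^ 2) * τF - (1 - lstar) ^ 2 * τG - 2 * lstar * (1 - lstar) * τFG) * l)
    (hc₂ : ∀ l : ℝ, lstar ≤ l → l ≤ 1 →
      c l = 2 * lstar * (τFG - τG) * (1 - l)
            + lstar ^ 2 * (τF + τG - 2 * τFG) * (1 / l - l)) :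
    ∀ l ∈ Set.Icc (0 : ℝ) 1, l ≠ lstar → |c l| < |c lstar| := by
  have hd : τG - τF ≠ 0 := sub_ne_zero.mpr (fun h => hne h.symm)
  set r : ℝ := (τFG - τF) / (τG - τF) with hrdef
  have hτFG : τFG = τF + r * (τG - τF) := by
    rw [hrdef, div_mul_cancel₀ _ hd]; ring
  have hDpos' := h1
  have hDpos : 0 < 2 * ((1 - lstar) ^ 2 + lstar) := by nlinarith
  have hrpos : 0 < r := lt_of_lt_of_le (div_pos (pow_pos (by linarith) 2) hDpos) hlow
  have hr1 : r < 1 := hhigh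
  have hlow' : (1 - lstar) ^ 2 ≤ r * (2 * ((1 - lstar) ^ 2 + lstar)) :=
    (div_le_iff₀ hDpos).mp hlow
  have hl0' : (0:ℝ) < lstar := h0
  -- abbreviations
  have hKpos : 0 < 1 - lstar + 2 * lstar * r := by nlinarith
  have hP : 0 < lstar * (1 - lstar) * (1 - lstar + 2 * lstar * r) :=
    mul_pos (mul_pos h0 (by linarith)) hKpos
  have hP' : 0 < (1 - lstar) * (1 - lstar + 2 * lstar * r) :=
    mul_pos (by linarith) hKpos
  set G : ℝ → ℝ := fun l => -(2 * lstar * (1 - r) * (1 - l)) +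
      lstar ^ 2 * (1 - 2 * r) * (1 / l - l) with hGdef
  -- c agrees with (τG - τF) * G on [lstar, 1]
  have hcG : ∀ l : ℝ, lstar ≤ l → l ≤ 1 → c l = (τG - τF) * G l := by
    intro l hl hl1
    have hlpos : (0:ℝ) < l := lt_of_lt_of_le h0 hl
    rw [hc₂ l hl hl1, hGdef, hτFG]
    field_simp
    ring
  -- value of G at lstar
  have hGstar : G lstar = -(lstar * (1 - lstar) * (1 - lstar + 2 * lstar * r)) := by
    rw [hGdef]
    field_simp
    ring
  have hGone : G 1 = 0 := by rw [hGdef]; norm_num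
  -- key bound from hlow
  have hab : lstar ^ 2 * (1 - 2 * r) * (1 / lstar ^ 2 + 1) ≤ 2 * lstar * (1 - r) := by
    have h1' : lstar ^ 2 * (1 - 2 * r) * (1 / lstar ^ 2 + 1) = (1 - 2 * r) * (1 + lstar ^ 2) := by
      field_simp
    rw [h1']
    nlinarith [hlow']
  -- strict monotonicity of G on [lstar, 1]
  have hmono : ∀ s t : ℝ, lstar ≤ s → s < t → t ≤ 1 → G s < G t := by
    intro s t hs hst ht1
    have hs0 : (0:ℝ) < s := lt_of_lt_of_le h0 hs
    have ht0 : (0:ℝ) < t := lt_trans hs0 hst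
    have key : G t - G s =
        (t - s) * (2 * lstar * (1 - r) - lstar ^ 2 * (1 - 2 * r) * (1 / (s * t) + 1)) := by
      rw [hGdef]
      field_simp
      ring
    have hpos : 0 < 2 * lstar * (1 - r) - lstar ^ 2 * (1 - 2 * r) * (1 / (s * t) + 1) := by
      rcases le_or_gt (1 - 2 * r) 0 with hb | hb
      · have h2 : 0 < 1 / (s * t) + 1 := by positivity
        have h3 : lstar ^ 2 * (1 - 2 * r) * (1 / (s * t) + 1) ≤ 0 := by
          have : lstar ^ 2 * (1 - 2 * r) ≤ 0 := by nlinarith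
          nlinarith
        nlinarith
      · have hst2 : lstar ^ 2 < s * t := by nlinarith
        have h4 : 1 / (s * t) < 1 / lstar ^ 2 := by
          apply one_div_lt_one_div_of_lt
          · positivity
          · exact hst2
        have h5 : lstar ^ 2 * (1 - 2 * r) * (1 / (s * t) + 1) <
            lstar ^ 2 * (1 - 2 * r) * (1 / lstar ^ 2 + 1) := by
          have hc : 0 < lstar ^ 2 * (1 - 2 * r) := by positivity
          apply (mul_lt_mul_iff_right₀ hc).mpr
          linarith
        linarith [hab]
    have hfin := mul_pos (sub_pos.mpr hst) hpos
    rw [← key] at hfin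
    linarith [hfin]
  -- value of |c lstar|
  have hcstar : c lstar = (τG - τF) * G lstar := hcG lstar le_rfl h1.le
  have habs_star : |c lstar| = |τG - τF| * (lstar * (1 - lstar) * (1 - lstar + 2 * lstar * r)) := by
    rw [hcstar, hGstar, abs_mul, abs_neg, abs_of_pos hP]
  have hMpos : 0 < |τG - τF| * (lstar * (1 - lstar) * (1 - lstar + 2 * lstar * r)) :=
    mul_pos (abs_pos.mpr hd) hP
  intro l hl hlne
  obtain ⟨hl0, hl1⟩ := hl
  rcases lt_trichotomy l lstar with hlt | heq | hgt
  · -- first branch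
    rw [hc₁ l hl0 hlt]
    have hA : (1 - lstar ^ 2) * τF - (1 - lstar) ^ 2 * τG - 2 * lstar * (1 - lstar) * τFG =
        -((τG - τF) * ((1 - lstar) * (1 - lstar + 2 * lstar * r))) := by
      rw [hτFG]; ring
    rw [hA, habs_star, abs_mul, abs_neg, abs_mul, abs_of_pos hP', abs_of_nonneg hl0]
    have h6 : 0 < |τG - τF| * ((1 - lstar) * (1 - lstar + 2 * lstar * r)) :=
      mul_pos (abs_pos.mpr hd) hP'
    calc |τG - τF| * ((1 - lstar) * (1 - lstar + 2 * lstar * r)) * l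
        < |τG - τF| * ((1 - lstar) * (1 - lstar + 2 * lstar * r)) * lstar := by
          exact mul_lt_mul_of_pos_left hlt h6
      _ = |τG - τF| * (lstar * (1 - lstar) * (1 - lstar + 2 * lstar * r)) := by ring
  · exact absurd heq hlne
  · -- second branch, lstar < l ≤ 1
    rw [hcG l hgt.le hl1, habs_star, abs_mul]
    have hGl : |G l| < lstar * (1 - lstar) * (1 - lstar + 2 * lstar * r) := by
      rcases eq_or_lt_of_le hl1 with h1' | h1'
      · rw [h1', hGone]
        simpa using hP
      · have hlow2 : G lstar < G l := hmono lstar l le_rfl hgt h1'.le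
        have hup : G l < G 1 := hmono l 1 hgt.le h1' le_rfl
        rw [hGone] at hup
        rw [hGstar] at hlow2
        rw [abs_lt]
        constructor <;> nlinarith
    have : 0 < |τG - τF| := abs_pos.mpr hd
    exact (mul_lt_mul_iff_right₀ this).mpr hGl
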